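/- Let A be an N×N matrix such that deg sum(adj(I - A·z)) < deg det(I - A·z) (equivalently, s ≥ r in the notation above). Then deg sum(adj(I - A·z)·A) = deg det(I - A·z) - 1. -/
import Mathlib


open Polynomial Matrix

/-- The sum of all the entries of a matrix. -/
def sumEntries {R : Type*} [AddCommMonoid R] {N : ℕ} (M : Matrix (Fin N) (Fin N) R) : R :=
  ∑ i, ∑ j, M i j

/-- `det(I - A·z)`. -/
noncomputable def detIsubAz {N : ℕ} (A : Matrix (Fin N) (Fin N) ℚ) : ℚ[X] :=
  ((1 : Matrix (Fin N) (Fin N) ℚ[X]) - (X : ℚ[X]) • A.map C).det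

/-- `sum(adj(I - A·z))`. -/
noncomputable def sumAdjIsubAz {N : ℕ} (A : Matrix (Fin N) (Fin N) ℚ) : ℚ[X] :=
  sumEntries (adjugate ((1 : Matrix (Fin N) (Fin N) ℚ[X]) - (X : ℚ[X]) • A.map C))

/-- `sum(adj(I - A·z)·A)`. -/
noncomputable def sumAdjIsubAzA {N : ℕ} (A : Matrix (Fin N) (Fin N) ℚ) : ℚ[X] :=
  sumEntries (adjugate ((1 : Matrix (Fin N) (Fin N) ℚ[X]) - (X : ℚ[X]) • A.map C) * A.map C)

lemma key_aux {N : ℕ} (A : Matrix (Fin N) (Fin N) ℚ) :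
    X * sumAdjIsubAzA A = sumAdjIsubAz A - (N : ℚ[X]) * detIsubAz A := by
  set M := (1 : Matrix (Fin N) (Fin N) ℚ[X]) - (X : ℚ[X]) • A.map C with hM
  have h1 : adjugate M * M = M.det • (1 : Matrix (Fin N) (Fin N) ℚ[X]) := adjugate_mul M
  have h2 : (X : ℚ[X]) • (adjugate M * A.map C) = adjugate M - M.det • 1 := by
    rw [hM] at h1
    rw [Matrix.mul_sub, Matrix.mul_one, Matrix.mul_smul] at h1
    linear_combination (norm := abel) -h1
  have h3 := congrArg sumEntries h2
  simp only [sumEntries, Matrix.sub_apply, Matrix.smul_apply, Matrix.one_apply,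
    smul_ite, smul_zero, smul_eq_mul, Finset.sum_sub_distrib, Finset.sum_ite_eq', Finset.sum_ite_eq,
    Finset.mem_univ, if_true, ← Finset.mul_sum, Finset.sum_const, Finset.card_univ,
    Fintype.card_fin, nsmul_eq_mul] at h3
  rw [sumAdjIsubAzA, sumAdjIsubAz, detIsubAz, sumEntries, ← hM]
  rw [h3, sumEntries]
  ring

/-- If `deg sum(adj(I - A·z)) < deg det(I - A·z)` then
`deg sum(adj(I - A·z)·A) = deg det(I - A·z) - 1`. -/
theorem stmt8 {N : ℕ} (A : Matrix (Fin N) (Fin N) ℚ)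
    (h : (sumAdjIsubAz A).natDegree < (detIsubAz A).natDegree) :
    (sumAdjIsubAzA A).natDegree = (detIsubAz A).natDegree - 1 := by
  have hd : 0 < (detIsubAz A).natDegree := lt_of_le_of_lt (Nat.zero_le _) h
  have hN : N ≠ 0 := by
    rintro rfl
    rw [detIsubAz, Matrix.det_fin_zero, natDegree_one] at hd
    exact lt_irrefl 0 hd
  have hNd : ((N : ℚ[X]) * detIsubAz A).natDegree = (detIsubAz A).natDegree := by
    rw [← Polynomial.C_eq_natCast]
    exact natDegree_C_mul (by exact_mod_cast hN)
  have hs : (sumAdjIsubAz A - (N : ℚ[X]) * detIsubAz A).natDegree = (detIsubAz A).natDegree := by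
    rw [← hNd]
    exact natDegree_sub_eq_right_of_natDegree_lt (by rwa [hNd])
  have hx : (X * sumAdjIsubAzA A).natDegree = (detIsubAz A).natDegree := by
    rw [key_aux]; exact hs
  have hne : sumAdjIsubAzA A ≠ 0 := by
    rintro hz
    rw [hz, mul_zero, natDegree_zero] at hx
    omega
  rw [natDegree_X_mul hne] at hx
  omega
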